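/- Let (X,ρ) be a bounded ultrametric space with at least two points whose diametrical graph is empty (i.e., ρ(x,y) < d* := diam(X,ρ) for all x,y). Then d(x,y) := ρ(x,y)/(d* − ρ(x,y)) defines an unbounded ultrametric on X satisfying ρ(x,y) = d*·d(x,y)/(1 + d(x,y)) for all x,y. -/

import Mathlib

/-- If `(X, ρ)` is a bounded ultrametric space with at least two points whose
diametrical graph is empty (`ρ(x,y) < d* := diam X` for all `x, y`), then
`d(x,y) = ρ(x,y) / (d* − ρ(x,y))` is an unbounded ultrametric on `X` with
`ρ(x,y) = d* ⬝ d(x,y) / (1 + d(x,y))`. -/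
theorem stmt_16 {X : Type*} [MetricSpace X] [Nontrivial X]
    (hU : ∀ x y z : X, dist x y ≤ max (dist x z) (dist z y))
    (hb : Bornology.IsBounded (Set.univ : Set X))
    (hemp : ∀ x y : X, dist x y < Metric.diam (Set.univ : Set X))
    (d : X → X → ℝ)
    (hd : ∀ x y : X, d x y =
      dist x y / (Metric.diam (Set.univ : Set X) - dist x y)) :
    (∀ x y : X, 0 ≤ d x y) ∧
    (∀ x y : X, d x y = 0 ↔ x = y) ∧
    (∀ x y : X, d x y = d y x) ∧
    (∀ x y z : X, d x y ≤ max (d x z) (d z y)) ∧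
    (∀ C : ℝ, ∃ x y : X, C < d x y) ∧
    (∀ x y : X, dist x y =
      Metric.diam (Set.univ : Set X) * d x y / (1 + d x y)) := by
  set D := Metric.diam (Set.univ : Set X) with hD
  obtain ⟨a, b, hab⟩ := exists_pair_ne X
  have hDpos : 0 < D := lt_of_le_of_lt dist_nonneg (hemp a b)
  have hsub : ∀ x y : X, 0 < D - dist x y := fun x y => sub_pos.2 (hemp x y)
  -- monotonicity of t ↦ t/(D - t)
  have hmono : ∀ s t : ℝ, 0 ≤ s → s ≤ t → t < D → s / (D - s) ≤ t / (D - t) := by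
    intro s t hs hst htD
    rw [div_le_div_iff₀ (by linarith) (by linarith)]
    nlinarith
  refine ⟨fun x y => ?_, fun x y => ?_, fun x y => ?_, fun x y z => ?_, fun C => ?_,
    fun x y => ?_⟩
  · rw [hd]; exact div_nonneg dist_nonneg (le_of_lt (hsub x y))
  · rw [hd, div_eq_zero_iff]
    constructor
    · rintro (h | h)
      · exact dist_eq_zero.1 h
      · exact absurd h (ne_of_gt (hsub x y))
    · intro h; left; simp [h]
  · rw [hd, hd, dist_comm]
  · rw [hd, hd, hd]
    rcases le_total (dist x z) (dist z y) with h | h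
    · refine le_max_of_le_right ?_
      exact hmono _ _ dist_nonneg (le_trans (hU x y z) (max_le h le_rfl)) (hemp z y)
    · refine le_max_of_le_left ?_
      exact hmono _ _ dist_nonneg (le_trans (hU x y z) (max_le le_rfl h)) (hemp x z)
  · rcases le_or_gt C 0 with hC | hC
    · refine ⟨a, b, lt_of_le_of_lt hC ?_⟩
      rw [hd]
      exact div_pos (dist_pos.2 hab) (hsub a b)
    · have hr : C * D / (1 + C) < D := by
        rw [div_lt_iff₀ (by linarith)]
        nlinarith
      have hrn : 0 ≤ C * D / (1 + C) := by positivity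
      by_contra h
      push_neg at h
      have : D ≤ C * D / (1 + C) := by
        refine Metric.diam_le_of_forall_dist_le hrn fun x _ y _ => ?_
        have := h x y
        rw [hd] at this
        rw [div_le_iff₀ (hsub x y)] at this
        rw [le_div_iff₀ (by linarith : (0:ℝ) < 1 + C)]
        nlinarith
      linarith
  · rw [hd]
    have h1 := hsub x y
    have h2 : 1 + dist x y / (D - dist x y) = D / (D - dist x y) := by
      field_simp
      ring
    rw [h2]
    field_simp
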